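/- Let ι: V_n → V_{n+1} be the linear inclusion sending each basis vector u_{ij} of V_n to the basis vector u_{ij} of V_{n+1}. Then for every a ∈ V_n, one has a ∈ R_1^{(n)} if and only if ι(a) ∈ R_1^{(n+1)}; that is, R_1(PΣ_n^+) = R_1(PΣ_{n+1}^+) ∩ H^1(PΣ_n^+;ℂ). -/

import Mathlib

/-- Index set for the basis `{u_{ij} : 1 ≤ j < i ≤ n}` (`0`-indexed). -/
abbrev RIdx (n : ℕ) := { p : Fin n × Fin n // p.2 < p.1 }

/-- `V = H¹(PΣₙ⁺;ℂ)`, the `ℂ`-vector space with basis `{u_{ij} : j < i}`. -/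
abbrev Vn (n : ℕ) := RIdx n → ℂ

/-- The basis vector `u_{ij}` (for `j < i`). -/
noncomputable def u (n : ℕ) (i j : Fin n) (h : j < i) : Vn n := Pi.single ⟨(i, j), h⟩ 1

/-- The wedge `a ∧ b`, viewed inside the exterior algebra `Λ(V)`. -/
noncomputable def wedge (n : ℕ) (a b : Vn n) : ExteriorAlgebra ℂ (Vn n) :=
  ExteriorAlgebra.ι ℂ a * ExteriorAlgebra.ι ℂ b

/-- The span `R ⊆ Λ²V` of the degree-2 relations `u_{ij} ∧ (u_{ik} − u_{jk})`
(`k < j < i`) of the cohomology ring of `PΣₙ⁺`. -/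
noncomputable def ResRel (n : ℕ) : Submodule ℂ (ExteriorAlgebra ℂ (Vn n)) :=
  Submodule.span ℂ { w | ∃ (i j k : Fin n) (hkj : k < j) (hji : j < i),
    w = wedge n (u n i j hji) (u n i k (hkj.trans hji) - u n j k hkj) }

/-- The first resonance variety `R₁ = {a ∈ V : ∃ b ∉ ℂ·a, a ∧ b ∈ R}`. -/
noncomputable def R1 (n : ℕ) : Set (Vn n) :=
  { a | ∃ b : Vn n, b ∉ Submodule.span ℂ {a} ∧ wedge n a b ∈ ResRel n }

/-- The linear subspace `L_{ij} ⊆ V` (for `j < i`) cut out by the equations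
`x_{il} + x_{jl} = 0` (`l < j`), `x_{il} = 0` (`j < l < i`), and `x_{st} = 0`
(`t < s`, `s ∉ {i,j}`). -/
noncomputable def L (n : ℕ) (i j : Fin n) (hji : j < i) : Submodule ℂ (Vn n) where
  carrier := { a |
    (∀ (l : Fin n) (h : l < j), a ⟨(i, l), h.trans hji⟩ + a ⟨(j, l), h⟩ = 0) ∧
    (∀ (l : Fin n) (h1 : j < l) (h2 : l < i), a ⟨(i, l), h2⟩ = 0) ∧
    (∀ (s t : Fin n) (h : t < s), s ≠ i → s ≠ j → a ⟨(s, t), h⟩ = 0) }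
  zero_mem' := by
    refine ⟨fun l h => ?_, fun l h1 h2 => ?_, fun s t h hs1 hs2 => ?_⟩ <;> simp
  add_mem' := by
    rintro a b ⟨ha1, ha2, ha3⟩ ⟨hb1, hb2, hb3⟩
    refine ⟨fun l h => ?_, fun l h1 h2 => ?_, fun s t h hs1 hs2 => ?_⟩
    · have h1 := ha1 l h; have h2 := hb1 l h
      simp only [Pi.add_apply]
      linear_combination h1 + h2
    · simp only [Pi.add_apply, ha2 l h1 h2, hb2 l h1 h2, add_zero]
    · simp only [Pi.add_apply, ha3 s t h hs1 hs2, hb3 s t h hs1 hs2, add_zero]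
  smul_mem' := by
    rintro c a ⟨ha1, ha2, ha3⟩
    refine ⟨fun l h => ?_, fun l h1 h2 => ?_, fun s t h hs1 hs2 => ?_⟩
    · have h1 := ha1 l h
      simp only [Pi.smul_apply, smul_eq_mul]
      linear_combination c * h1
    · simp only [Pi.smul_apply, ha2 l h1 h2, smul_zero]
    · simp only [Pi.smul_apply, ha3 s t h hs1 hs2, smul_zero]

/-- The linear inclusion `V_n → V_{n+1}` sending each basis vector `u_{ij}` of `V_n`
to the corresponding basis vector `u_{ij}` of `V_{n+1}`. -/
noncomputable def inclV (n : ℕ) : Vn n →ₗ[ℂ] Vn (n + 1) where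
  toFun a p :=
    if h : p.1.1.val < n then
      a ⟨(⟨p.1.1.val, h⟩, ⟨p.1.2.val, lt_trans p.2 h⟩), p.2⟩
    else 0
  map_add' a b := by
    funext p
    by_cases h : p.1.1.val < n <;> simp [h]
  map_smul' c a := by
    funext p
    by_cases h : p.1.1.val < n <;> simp [h]


namespace R1Aux

/-- bilinear coordinate map (x,y) ↦ x p * y q as a multilinear map. -/
noncomputable def coefBil (m : ℕ) (p q : RIdx m) :
    MultilinearMap ℂ (fun _ : Fin 2 => Vn m) ℂ :=
  (MultilinearMap.mkPiAlgebra ℂ (Fin 2) ℂ).compLinearMap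
    ![LinearMap.proj p, LinearMap.proj q]

lemma coefBil_apply (m : ℕ) (p q : RIdx m) (v : Fin 2 → Vn m) :
    coefBil m p q v = v 0 p * v 1 q := by
  simp [coefBil, Fin.prod_univ_two]

/-- the alternating coordinate form (x,y) ↦ x p * y q - x q * y p. -/
noncomputable def coefForm (m : ℕ) (p q : RIdx m) : Vn m [⋀^Fin 2]→ₗ[ℂ] ℂ where
  toMultilinearMap := coefBil m p q - coefBil m q p
  map_eq_zero_of_eq' := by
    intro v i j hv hij
    show coefBil m p q v - coefBil m q p v = 0
    rw [coefBil_apply, coefBil_apply]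
    fin_cases i <;> fin_cases j <;> simp_all <;> ring

lemma coefForm_apply (m : ℕ) (p q : RIdx m) (v : Fin 2 → Vn m) :
    coefForm m p q v = v 0 p * v 1 q - v 0 q * v 1 p := by
  show (coefBil m p q - coefBil m q p) v = _
  show coefBil m p q v - coefBil m q p v = _
  rw [coefBil_apply, coefBil_apply]

noncomputable def pad (m : ℕ) (g : Vn m [⋀^Fin 2]→ₗ[ℂ] ℂ) :
    ∀ i : ℕ, Vn m [⋀^Fin i]→ₗ[ℂ] ℂ
  | 2 => g
  | _ => 0

noncomputable def phi (m : ℕ) (g : Vn m [⋀^Fin 2]→ₗ[ℂ] ℂ) :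
    ExteriorAlgebra ℂ (Vn m) →ₗ[ℂ] ℂ :=
  ExteriorAlgebra.liftAlternating (pad m g)

lemma phi_wedge (m : ℕ) (g : Vn m [⋀^Fin 2]→ₗ[ℂ] ℂ) (a b : Vn m) :
    phi m g (wedge m a b) = g ![a, b] := by
  rw [wedge, phi, ExteriorAlgebra.liftAlternating_ι_mul,
    ExteriorAlgebra.liftAlternating_ι]
  show (pad m g 2).curryLeft a ![b] = g ![a, b]
  rfl

lemma u_apply (m : ℕ) (i j : Fin m) (h : j < i) (p : RIdx m) :
    u m i j h p = if p.1.1 = i ∧ p.1.2 = j then 1 else 0 := by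
  rw [u, Pi.single_apply]
  congr 1
  simp [Subtype.ext_iff, Prod.ext_iff]

/-- if an alternating 2-form kills the defining relations, then the induced
functional kills `ResRel`. -/
lemma phi_vanish (m : ℕ) (g : Vn m [⋀^Fin 2]→ₗ[ℂ] ℂ)
    (hg : ∀ (i j k : Fin m) (hkj : k < j) (hji : j < i),
      g ![u m i j hji, u m i k (hkj.trans hji) - u m j k hkj] = 0)
    {x : ExteriorAlgebra ℂ (Vn m)} (hx : x ∈ ResRel m) : phi m g x = 0 := by
  have hle : ResRel m ≤ LinearMap.ker (phi m g) := by
    rw [ResRel, Submodule.span_le]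
    rintro w ⟨i, j, k, hkj, hji, rfl⟩
    simpa [LinearMap.mem_ker, phi_wedge] using hg i j k hkj hji
  exact hle hx

set_option maxHeartbeats 2000000 in
/-- the relation-shaped sum of coordinate forms kills all relations. -/
lemma rel_form_vanish (m : ℕ) (i j k : Fin m) (hkj : k < j) (hji : j < i)
    (i' j' k' : Fin m) (hkj' : k' < j') (hji' : j' < i') :
    (coefForm m ⟨(i,j),hji⟩ ⟨(i,k),hkj.trans hji⟩
      + coefForm m ⟨(i,j),hji⟩ ⟨(j,k),hkj⟩)
      ![u m i' j' hji', u m i' k' (hkj'.trans hji') - u m j' k' hkj'] = 0 := by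
  have Hkj : k.val < j.val := hkj
  have Hji : j.val < i.val := hji
  have Hkj' : k'.val < j'.val := hkj'
  have Hji' : j'.val < i'.val := hji'
  simp only [AlternatingMap.add_apply, coefForm_apply, Matrix.cons_val_zero,
    Matrix.cons_val_one, Matrix.head_cons, Pi.sub_apply, u_apply, Fin.ext_iff]
  split_ifs <;> first | ring1 | (exfalso; omega)

/-- a coordinate form on a "forbidden" pair kills all relations. -/
lemma forbid_form_vanish (m : ℕ) (p q : RIdx m)
    (h1 : p.1.1.val ≠ q.1.1.val) (h2 : p.1.1.val ≠ q.1.2.val)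
    (h3 : q.1.1.val ≠ p.1.2.val)
    (i' j' k' : Fin m) (hkj' : k' < j') (hji' : j' < i') :
    coefForm m p q
      ![u m i' j' hji', u m i' k' (hkj'.trans hji') - u m j' k' hkj'] = 0 := by
  have Hkj' : k'.val < j'.val := hkj'
  have Hji' : j'.val < i'.val := hji'
  simp only [coefForm_apply, Matrix.cons_val_zero,
    Matrix.cons_val_one, Matrix.head_cons, Pi.sub_apply, u_apply, Fin.ext_iff]
  split_ifs <;> simp_all <;> omega

/-- the restriction map `V_{n+1} → V_n`. -/
noncomputable def restr (n : ℕ) : Vn (n + 1) →ₗ[ℂ] Vn n where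
  toFun a p := a ⟨(p.1.1.castSucc, p.1.2.castSucc), Fin.castSucc_lt_castSucc_iff.mpr p.2⟩
  map_add' a b := rfl
  map_smul' c a := rfl

lemma restr_inclV (n : ℕ) (a : Vn n) : restr n (inclV n a) = a := by
  funext p
  show inclV n a _ = a p
  rw [inclV]
  simp only [LinearMap.coe_mk, AddHom.coe_mk, Fin.coe_castSucc]
  rw [dif_pos p.1.1.isLt]

lemma inclV_injective (n : ℕ) {a b : Vn n} (h : inclV n a = inclV n b) : a = b := by
  have := congrArg (restr n) h
  rwa [restr_inclV, restr_inclV] at this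

lemma inclV_u (n : ℕ) (i j : Fin n) (h : j < i) :
    inclV n (u n i j h) = u (n + 1) i.castSucc j.castSucc
      (Fin.castSucc_lt_castSucc_iff.mpr h) := by
  funext p
  rw [inclV]
  simp only [LinearMap.coe_mk, AddHom.coe_mk]
  rw [u_apply]
  by_cases hp : p.1.1.val < n
  · rw [dif_pos hp, u_apply]
    simp only [Fin.ext_iff]
    congr 1
  · rw [dif_neg hp]
    have : ¬ (p.1.1 = i.castSucc ∧ p.1.2 = j.castSucc) := by
      rintro ⟨h1, -⟩
      apply hp
      rw [h1]
      exact i.isLt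
    rw [if_neg this]

lemma inclV_apply_row_n (n : ℕ) (a : Vn n) (p : RIdx (n + 1)) (hp : ¬ p.1.1.val < n) :
    inclV n a p = 0 := by
  rw [inclV]
  simp only [LinearMap.coe_mk, AddHom.coe_mk]
  rw [dif_neg hp]

lemma inclV_apply_lt (n : ℕ) (a : Vn n) (p : RIdx (n + 1)) (hp : p.1.1.val < n) :
    inclV n a p = a ⟨(⟨p.1.1.val, hp⟩, ⟨p.1.2.val, lt_trans p.2 hp⟩), p.2⟩ := by
  rw [inclV]
  simp only [LinearMap.coe_mk, AddHom.coe_mk]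
  rw [dif_pos hp]

/-- transport of span membership along a linear map. -/
lemma map_mem_span {M N : Type*} [AddCommGroup M] [Module ℂ M] [AddCommGroup N]
    [Module ℂ N] (F : M →ₗ[ℂ] N) {S : Set M} {T : Set N}
    (h : ∀ s ∈ S, F s ∈ Submodule.span ℂ T) {x : M}
    (hx : x ∈ Submodule.span ℂ S) : F x ∈ Submodule.span ℂ T := by
  have hle : Submodule.span ℂ S ≤ (Submodule.span ℂ T).comap F :=
    Submodule.span_le.mpr h
  exact hle hx

lemma restr_u_lt (n : ℕ) (i j : Fin (n + 1)) (h : j < i) (hi : i.val < n) :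
    restr n (u (n + 1) i j h) =
      u n ⟨i.val, hi⟩ ⟨j.val, lt_trans h hi⟩ h := by
  funext p
  show u (n + 1) i j h _ = _
  rw [u_apply, u_apply]
  simp [Fin.ext_iff]

lemma restr_u_last (n : ℕ) (i j : Fin (n + 1)) (h : j < i) (hi : ¬ i.val < n) :
    restr n (u (n + 1) i j h) = 0 := by
  funext p
  show u (n + 1) i j h _ = _
  rw [u_apply, if_neg, Pi.zero_apply]
  rintro ⟨h1, -⟩
  have := p.1.1.isLt
  have : (p.1.1.castSucc : Fin (n+1)).val = i.val := congrArg Fin.val h1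
  simp only [Fin.coe_castSucc] at this
  omega

end R1Aux

set_option maxHeartbeats 2000000 in
/-- `R₁(PΣₙ⁺) = R₁(PΣₙ₊₁⁺) ∩ H¹(PΣₙ⁺; ℂ)`: a vector `a ∈ Vₙ` is in the first
resonance variety of `PΣₙ⁺` if and only if its image in `Vₙ₊₁` is in the first
resonance variety of `PΣₙ₊₁⁺`. -/
theorem R1_restriction (n : ℕ) (hn : 3 ≤ n) :
    ∀ a : Vn n, a ∈ R1 n ↔ inclV n a ∈ R1 (n + 1) := by
  intro a
  constructor
  · rintro ⟨b, hb, hw⟩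
    refine ⟨inclV n b, ?_, ?_⟩
    · intro hmem
      rcases Submodule.mem_span_singleton.mp hmem with ⟨c, hc⟩
      apply hb
      rw [Submodule.mem_span_singleton]
      refine ⟨c, R1Aux.inclV_injective n ?_⟩
      rw [map_smul]
      exact hc
    · rw [ResRel] at hw ⊢
      have heq : wedge (n+1) (inclV n a) (inclV n b)
          = (ExteriorAlgebra.map (inclV n)).toLinearMap (wedge n a b) := by
        simp [wedge, map_mul, ExteriorAlgebra.map_apply_ι]
      rw [heq]
      refine R1Aux.map_mem_span _ ?_ hw
      rintro w ⟨i, j, k, hkj, hji, rfl⟩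
      apply Submodule.subset_span
      refine ⟨i.castSucc, j.castSucc, k.castSucc, Fin.castSucc_lt_castSucc_iff.mpr hkj,
        Fin.castSucc_lt_castSucc_iff.mpr hji, ?_⟩
      simp [wedge, map_mul, map_sub, ExteriorAlgebra.map_apply_ι, R1Aux.inclV_u]
  · rintro ⟨b', hb', hw'⟩
    by_cases hcase : R1Aux.restr n b' ∈ Submodule.span ℂ {a}
    · -- degenerate case : `a = 0`
      rcases Submodule.mem_span_singleton.mp hcase with ⟨c, hc⟩
      have hex : ∃ q : RIdx (n+1), ¬ (q.1.1.val < n) ∧ b' q ≠ 0 := by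
        by_contra hno
        push_neg at hno
        apply hb'
        have hb'eq : b' = inclV n (R1Aux.restr n b') := by
          funext p
          by_cases hp : p.1.1.val < n
          · rw [R1Aux.inclV_apply_lt n _ p hp]
            rfl
          · rw [R1Aux.inclV_apply_row_n n _ p hp]
            exact hno p (le_of_not_gt hp)
        rw [Submodule.mem_span_singleton]
        exact ⟨c, by rw [hb'eq, ← hc, map_smul]⟩
      obtain ⟨q, hqn, hq0⟩ := hex
      have hqval : q.1.1.val = n := by have := q.1.1.isLt; omega
      have ha : a = 0 := by
        funext p
        rw [Pi.zero_apply]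
        have hpi : p.1.1.val < n := p.1.1.isLt
        have hpj : p.1.2.val < p.1.1.val := p.2
        have hji' : p.1.2.castSucc < p.1.1.castSucc := Fin.castSucc_lt_castSucc_iff.mpr p.2
        set p' : RIdx (n+1) := ⟨(p.1.1.castSucc, p.1.2.castSucc), hji'⟩ with hp'def
        have hap' : inclV n a p' = a p := by
          rw [R1Aux.inclV_apply_lt n a p' (by rw [hp'def]; exact hpi)]
          rfl
        by_cases hti : q.1.2.val = p.1.1.val
        · -- use the relation-shaped form for the triple (q₁₁, i, j)
          have hlt2 : p.1.1.castSucc < q.1.1 := by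
            rw [Fin.lt_def, Fin.coe_castSucc, hqval]; exact hpi
          have hlt1 : p.1.2.castSucc < p.1.1.castSucc := hji'
          have hv := R1Aux.phi_vanish (n+1)
            (R1Aux.coefForm (n+1) ⟨(q.1.1, p.1.1.castSucc), hlt2⟩
                ⟨(q.1.1, p.1.2.castSucc), hlt1.trans hlt2⟩
              + R1Aux.coefForm (n+1) ⟨(q.1.1, p.1.1.castSucc), hlt2⟩
                ⟨(p.1.1.castSucc, p.1.2.castSucc), hlt1⟩)
            (fun i' j' k' hkj' hji'' =>
              R1Aux.rel_form_vanish (n+1) q.1.1 p.1.1.castSucc p.1.2.castSucc hlt1 hlt2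
                i' j' k' hkj' hji'') hw'
          rw [R1Aux.phi_wedge, AlternatingMap.add_apply, R1Aux.coefForm_apply,
            R1Aux.coefForm_apply] at hv
          simp only [Matrix.cons_val_zero, Matrix.cons_val_one, Matrix.head_cons] at hv
          have hz1 : inclV n a ⟨(q.1.1, p.1.1.castSucc), hlt2⟩ = 0 :=
            R1Aux.inclV_apply_row_n n a _ (by simp [hqval])
          have hz2 : inclV n a ⟨(q.1.1, p.1.2.castSucc), hlt1.trans hlt2⟩ = 0 :=
            R1Aux.inclV_apply_row_n n a _ (by simp [hqval])
          rw [hz1, hz2, hap'] at hv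
          have hqeq : (⟨(q.1.1, p.1.1.castSucc), hlt2⟩ : RIdx (n+1)) = q := by
            refine Subtype.ext (Prod.ext rfl (Fin.ext ?_))
            simp [hti]
          rw [hqeq] at hv
          have : a p * b' q = 0 := by linear_combination -hv
          rcases mul_eq_zero.mp this with h | h
          · exact h
          · exact absurd h hq0
        · -- forbidden pair
          have hv := R1Aux.phi_vanish (n+1) (R1Aux.coefForm (n+1) p' q)
            (fun i' j' k' hkj' hji'' =>
              R1Aux.forbid_form_vanish (n+1) p' q
                (by simp only [hp'def, Fin.coe_castSucc]; omega)
                (by simp only [hp'def, Fin.coe_castSucc]; omega)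
                (by simp only [hp'def, Fin.coe_castSucc]; have := q.2; rw [Fin.lt_def] at this; omega)
                i' j' k' hkj' hji'') hw'
          rw [R1Aux.phi_wedge, R1Aux.coefForm_apply] at hv
          simp only [Matrix.cons_val_zero, Matrix.cons_val_one, Matrix.head_cons] at hv
          have hzq : inclV n a q = 0 := R1Aux.inclV_apply_row_n n a q hqn
          rw [hzq, hap'] at hv
          have : a p * b' q = 0 := by linear_combination hv
          rcases mul_eq_zero.mp this with h | h
          · exact h
          · exact absurd h hq0
      rw [ha]
      refine ⟨u n ⟨1, by omega⟩ ⟨0, by omega⟩ (by exact Nat.zero_lt_one), ?_, ?_⟩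
      · intro hmem
        rw [Submodule.span_zero_singleton, Submodule.mem_bot] at hmem
        have h1 := congrFun hmem ⟨(⟨1, by omega⟩, ⟨0, by omega⟩), by exact Nat.zero_lt_one⟩
        simp [u] at h1
      · have hz : wedge n 0 (u n ⟨1, by omega⟩ ⟨0, by omega⟩ (by exact Nat.zero_lt_one)) = 0 := by
          rw [wedge, map_zero, zero_mul]
        rw [hz]
        exact Submodule.zero_mem _
    · -- generic case : restrict the witness
      refine ⟨R1Aux.restr n b', hcase, ?_⟩
      rw [ResRel] at hw' ⊢
      have heq : wedge n a (R1Aux.restr n b')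
          = (ExteriorAlgebra.map (R1Aux.restr n)).toLinearMap
              (wedge (n+1) (inclV n a) b') := by
        rw [wedge, wedge, AlgHom.toLinearMap_apply, map_mul,
          ExteriorAlgebra.map_apply_ι, ExteriorAlgebra.map_apply_ι, R1Aux.restr_inclV]
      rw [heq]
      refine R1Aux.map_mem_span _ ?_ hw'
      rintro w ⟨i, j, k, hkj, hji, rfl⟩
      by_cases hi : i.val < n
      · have hj : j.val < n := lt_trans hji hi
        have hk : k.val < n := lt_trans hkj hj
        apply Submodule.subset_span
        refine ⟨⟨i.val, hi⟩, ⟨j.val, hj⟩, ⟨k.val, hk⟩, hkj, hji, ?_⟩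
        rw [AlgHom.toLinearMap_apply, wedge, wedge, map_mul,
          ExteriorAlgebra.map_apply_ι, ExteriorAlgebra.map_apply_ι, map_sub,
          R1Aux.restr_u_lt n i j hji hi, R1Aux.restr_u_lt n i k (hkj.trans hji) hi,
          R1Aux.restr_u_lt n j k hkj hj]
      · have h0 : R1Aux.restr n (u (n+1) i j hji) = 0 := R1Aux.restr_u_last n i j hji hi
        have hz : (ExteriorAlgebra.map (R1Aux.restr n)).toLinearMap
            (wedge (n+1) (u (n+1) i j hji)
              (u (n+1) i k (hkj.trans hji) - u (n+1) j k hkj)) = 0 := by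
          rw [AlgHom.toLinearMap_apply, wedge, map_mul, ExteriorAlgebra.map_apply_ι,
            h0, map_zero, zero_mul]
        rw [hz]
        exact Submodule.zero_mem _
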